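/- Let V > 0, r_d > 0, k > 0 and let r, θ : ℝ → ℝ be differentiable functions satisfying for all t ≥ t₀: r'(t) = −V·cos θ(t), θ'(t) = ω(t) + V·sin θ(t)/r(t), where ω(t) = 2·k·r(t)·V·(cos θ(t) − √(1 − (r_d/r(t))²)) if r(t) ≥ r_d and ω(t) = 0 otherwise. If r(t₀) ≥ r_d and arcsin(r_d/r(t₀)) < θ(t₀) < 2π − arcsin(r_d/r(t₀)), then r(t) ≥ r_d for all t ≥ t₀, and moreover arcsin(r_d/r(t)) ≤ θ(t) < 2π − arcsin(r_d/r(t)) for all t ≥ t₀. -/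

import Mathlib

open Real Set Filter

section UAVAux

lemma sqrt_key {rd rr : ℝ} (hrd : 0 ≤ rd) (h0 : 0 < rr) (h1 : rd ≤ rr) :
    rr * Real.sqrt (1 - (rd/rr)^2) = Real.sqrt (rr^2 - rd^2) := by
  have h2 : (0:ℝ) ≤ 1 - (rd/rr)^2 := by
    have : rd/rr ≤ 1 := (div_le_one h0).2 h1
    have h3 : 0 ≤ rd/rr := div_nonneg hrd h0.le
    nlinarith
  have : rr^2 - rd^2 = (1 - (rd/rr)^2) * rr^2 := by field_simp
  rw [this, Real.sqrt_mul h2, Real.sqrt_sq h0.le]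
  ring

lemma contInd {t₀ T : ℝ} {P : ℝ → Prop} (hT : t₀ ≤ T) (h0 : P t₀)
    (hcl : ∀ t, t₀ < t → t ≤ T → (∀ s, t₀ ≤ s → s < t → P s) → P t)
    (hpr : ∀ t, t₀ ≤ t → t < T → (∀ s, t₀ ≤ s → s ≤ t → P s) →
      ∃ δ > 0, ∀ s, t < s → s ≤ t + δ → P s) :
    ∀ t, t₀ ≤ t → t ≤ T → P t := by
  set A : Set ℝ := {t | t₀ ≤ t ∧ t ≤ T ∧ ∀ s, t₀ ≤ s → s ≤ t → P s} with hA
  have h0A : t₀ ∈ A := ⟨le_rfl, hT, fun s h1 h2 => (le_antisymm h2 h1) ▸ h0⟩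
  have hbdd : BddAbove A := ⟨T, fun a ha => ha.2.1⟩
  set c := sSup A with hc
  have hcT : c ≤ T := csSup_le ⟨t₀, h0A⟩ (fun a ha => ha.2.1)
  have ht₀c : t₀ ≤ c := le_csSup hbdd h0A
  have hlt : ∀ s, t₀ ≤ s → s < c → P s := by
    intro s hs hsc
    obtain ⟨a, haA, hsa⟩ := exists_lt_of_lt_csSup ⟨t₀, h0A⟩ hsc
    exact haA.2.2 s hs hsa.le
  have hPc : ∀ s, t₀ ≤ s → s ≤ c → P s := by
    intro s hs hsc
    rcases lt_or_eq_of_le hsc with h | h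
    · exact hlt s hs h
    · rw [h]
      rcases lt_or_eq_of_le ht₀c with h' | h'
      · exact hcl c h' hcT hlt
      · exact h' ▸ h0
  rcases lt_or_eq_of_le hcT with h | h
  · exfalso
    obtain ⟨δ, hδ, hs⟩ := hpr c ht₀c h hPc
    have hmem : min (c + δ) T ∈ A := by
      refine ⟨le_trans ht₀c (le_min (by linarith) h.le), min_le_right _ _, ?_⟩
      intro s h1 h2
      rcases le_or_gt s c with h3 | h3
      · exact hPc s h1 h3
      · exact hs s h3 (le_trans h2 (min_le_left _ _))
    have h2 := le_csSup hbdd hmem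
    have h3 : c < min (c + δ) T := lt_min (by linarith) h
    exact absurd h2 (not_le.2 h3)
  · intro t h1 h2
    exact hPc t h1 (h ▸ h2)

lemma gronwall_zero {g g' : ℝ → ℝ} {a b L : ℝ}
    (hd : ∀ t ∈ Icc a b, HasDerivAt g (g' t) t)
    (hb : ∀ t ∈ Icc a b, |g' t| ≤ L * |g t|) (h0 : g a = 0) :
    ∀ t ∈ Icc a b, g t = 0 := by
  rcases le_or_gt a b with hab | hab
  · have hcont : ContinuousOn g (Icc a b) :=
      fun t ht => (hd t ht).continuousAt.continuousWithinAt
    have key := norm_le_gronwallBound_of_norm_deriv_right_le (δ := 0) (K := |L|) (ε := 0)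
      hcont (fun t ht => (hd t (Ico_subset_Icc_self ht)).hasDerivWithinAt)
      (by simp [h0])
      (fun t ht => by
        have h1 := hb t (Ico_subset_Icc_self ht)
        have h2 : L * |g t| ≤ |L| * |g t| := by
          apply mul_le_mul_of_nonneg_right (le_abs_self L) (abs_nonneg _)
        simp only [Real.norm_eq_abs, add_zero]
        linarith)
    intro t ht
    have := key t ht
    rw [gronwallBound_ε0_δ0] at this
    have habs : |g t| ≤ 0 := by simpa using this
    exact abs_eq_zero.1 (le_antisymm habs (abs_nonneg _))
  · intro t ht; exact absurd (ht.1.trans ht.2) (not_le.2 hab)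

lemma mono_of_deriv {f f' : ℝ → ℝ} {a b : ℝ}
    (hd : ∀ t ∈ Icc a b, HasDerivAt f (f' t) t)
    (h0 : ∀ t ∈ Icc a b, 0 ≤ f' t) :
    ∀ t ∈ Icc a b, f a ≤ f t := by
  rcases le_or_gt a b with hab | hab
  · have hmono : MonotoneOn f (Icc a b) := by
      apply monotoneOn_of_deriv_nonneg (convex_Icc a b)
      · exact fun t ht => (hd t ht).continuousAt.continuousWithinAt
      · intro t ht
        rw [interior_Icc] at ht
        exact (hd t (Ioo_subset_Icc_self ht)).differentiableAt.differentiableWithinAt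
      · intro t ht
        rw [interior_Icc] at ht
        rw [(hd t (Ioo_subset_Icc_self ht)).deriv]
        exact h0 t (Ioo_subset_Icc_self ht)
    intro t ht
    exact hmono ⟨le_rfl, hab⟩ ht ht.1
  · intro t ht; exact absurd (ht.1.trans ht.2) (not_le.2 hab)

lemma near_Icc {t : ℝ} {Q : ℝ → Prop} (h : ∀ᶠ s in nhds t, Q s) :
    ∃ δ > 0, ∀ s ∈ Icc (t - δ) (t + δ), Q s := by
  rcases Metric.eventually_nhds_iff.mp h with ⟨ε, hε, hQ⟩
  refine ⟨ε/2, by positivity, fun s hs => hQ ?_⟩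
  rw [Real.dist_eq, abs_lt]
  constructor <;> [linarith [hs.1]; linarith [hs.2]]

lemma near_left {t₀ t : ℝ} (h : t₀ < t) {Q : ℝ → Prop} (hev : ∀ᶠ s in nhds t, Q s) :
    ∃ s, t₀ ≤ s ∧ s < t ∧ Q s := by
  rcases Metric.eventually_nhds_iff.mp hev with ⟨ε, hε, hQ⟩
  refine ⟨max t₀ (t - ε/2), le_max_left _ _, max_lt h (by linarith), hQ ?_⟩
  rw [Real.dist_eq, abs_lt]
  constructor
  · have := le_max_right t₀ (t - ε/2); linarith [max_lt h (show t - ε/2 < t by linarith)]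
  · linarith [max_lt h (show t - ε/2 < t by linarith)]

lemma cos_nonpos_window {t : ℝ} (h1 : 0 < t) (h2 : t < 2*π) (hc : Real.cos t ≤ 0) :
    π/2 ≤ t ∧ t ≤ π + π/2 := by
  constructor
  · by_contra h
    push_neg at h
    have : 0 < Real.cos t := Real.cos_pos_of_mem_Ioo ⟨by linarith [Real.pi_pos], h⟩
    linarith
  · by_contra h
    push_neg at h
    have h3 : 0 < Real.cos (t - 2*π) :=
      Real.cos_pos_of_mem_Ioo ⟨by linarith, by linarith [Real.pi_pos]⟩
    rw [Real.cos_sub_two_pi] at h3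
    linarith

lemma cos_pos_window {t : ℝ} (h1 : 0 < t) (h2 : t < 2*π) (hc : 0 < Real.cos t) :
    t < π/2 ∨ π + π/2 < t := by
  by_contra h
  push_neg at h
  have := Real.cos_nonpos_of_pi_div_two_le_of_le h.1 h.2
  linarith

lemma sin_neg_window {t : ℝ} (h1 : π + π/2 < t) (h2 : t < 2*π) : Real.sin t < 0 := by
  have h3 : 0 < Real.sin (2*π - t) :=
    Real.sin_pos_of_pos_of_lt_pi (by linarith) (by linarith [Real.pi_pos])
  have h4 : Real.sin (2*π - t) = -Real.sin t := by
    simp [Real.sin_sub]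
  linarith

lemma sin_three_pi_two : Real.sin (π + π/2) = -1 := by
  rw [Real.sin_add]; simp

lemma cos_three_pi_two : Real.cos (π + π/2) = 0 := by
  rw [Real.cos_add]; simp

lemma cos_zero_window {t : ℝ} (h1 : 0 < t) (h2 : t < 2*π) (hc : Real.cos t = 0) :
    t = π/2 ∨ t = π + π/2 := by
  obtain ⟨n, hn⟩ := Real.cos_eq_zero_iff.1 hc
  have hπ := Real.pi_pos
  have hlow : (0:ℝ) < 2*(n:ℝ)+1 := by
    by_contra h
    push_neg at h
    nlinarith
  have hhigh : (2*(n:ℝ)+1) < 4 := by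
    by_contra h
    push_neg at h
    nlinarith
  have h1' : (0:ℤ) < 2*n+1 := by exact_mod_cast hlow
  have h2' : (2*n+1 : ℤ) < 4 := by exact_mod_cast hhigh
  have : n = 0 ∨ n = 1 := by omega
  rcases this with h | h <;> rw [h] at hn <;> [left; right] <;> rw [hn] <;> push_cast <;> ring

lemma window_of_K {r_d rr th : ℝ} (hrd : 0 < r_d) (hr : r_d ≤ rr)
    (hth1 : 0 < th) (hth2 : th < 2*π)
    (hdisj : rr * Real.cos th ≤ 0 ∨ r_d ≤ rr * Real.sin th ∨ rr * Real.sin th ≤ -r_d)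
    (hS : ¬(0 ≤ rr * Real.cos th ∧ rr * Real.sin th = -r_d)) :
    Real.arcsin (r_d / rr) ≤ th ∧ th < 2*π - Real.arcsin (r_d / rr) := by
  have hr0 : 0 < rr := lt_of_lt_of_le hrd hr
  set s := r_d / rr with hs
  have hs0 : 0 < s := div_pos hrd hr0
  have hs1 : s ≤ 1 := (div_le_one hr0).2 hr
  have has0 : 0 ≤ Real.arcsin s := Real.arcsin_nonneg.2 hs0.le
  have hasp : Real.arcsin s ≤ π/2 := Real.arcsin_le_pi_div_two s
  rcases le_or_gt (Real.cos th) 0 with hc | hc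
  · obtain ⟨hl, hu⟩ := cos_nonpos_window hth1 hth2 hc
    refine ⟨by linarith, ?_⟩
    by_contra hcon
    push_neg at hcon
    have h1 : π/2 ≤ Real.arcsin s := by linarith
    have h2 : Real.arcsin s = π/2 := le_antisymm hasp h1
    have h3 : s = 1 := by
      have := Real.sin_arcsin (by linarith : (-1:ℝ) ≤ s) hs1
      rw [h2] at this
      simpa using this.symm
    have h4 : rr = r_d := by
      rw [hs, div_eq_one_iff_eq hr0.ne'] at h3
      linarith
    have h5 : th = π + π/2 := by
      rw [h2] at hcon
      linarith
    exact hS ⟨by rw [h5, cos_three_pi_two]; simp, by rw [h5, sin_three_pi_two, h4]; ring⟩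
  · have hx : 0 < rr * Real.cos th := mul_pos hr0 hc
    rcases hdisj with h | h | h
    · linarith
    · have hsin : s ≤ Real.sin th := by
        rw [hs, div_le_iff₀ hr0]
        linarith [mul_comm (Real.sin th) rr]
      have hsinpos : 0 < Real.sin th := lt_of_lt_of_le hs0 hsin
      rcases cos_pos_window hth1 hth2 hc with h2 | h2
      · have harc : Real.arcsin s ≤ Real.arcsin (Real.sin th) := Real.monotone_arcsin hsin
        rw [Real.arcsin_sin (by linarith [Real.pi_pos]) h2.le] at harc
        exact ⟨harc, by linarith [Real.pi_pos]⟩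
      · have := sin_neg_window h2 hth2
        linarith
    · have hne : rr * Real.sin th ≠ -r_d := fun he => hS ⟨(mul_pos hr0 hc).le, he⟩
      have hlt : rr * Real.sin th < -r_d := lt_of_le_of_ne h hne
      have hsin : Real.sin th < -s := by
        rw [hs, ← neg_div]
        exact (lt_div_iff₀ hr0).2 (by linarith [mul_comm rr (Real.sin th)])
      have hsinneg : Real.sin th < 0 := by linarith
      rcases cos_pos_window hth1 hth2 hc with h2 | h2
      · have : 0 < Real.sin th := Real.sin_pos_of_pos_of_lt_pi hth1 (by linarith [Real.pi_pos])
        linarith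
      · refine ⟨by linarith, ?_⟩
        have hφ1 : 0 < 2*π - th := by linarith
        have hφ2 : 2*π - th < π/2 := by linarith
        have hsinφ : Real.sin (2*π - th) = -Real.sin th := by simp [Real.sin_sub]
        have hgt : s < Real.sin (2*π - th) := by rw [hsinφ]; linarith
        have harc : Real.arcsin s < Real.arcsin (Real.sin (2*π - th)) := by
          apply Real.strictMonoOn_arcsin (Set.mem_Icc.2 ⟨by linarith, hs1⟩)
            (Set.mem_Icc.2 ⟨by linarith [Real.neg_one_le_sin (2*π - th)], Real.sin_le_one _⟩) hgt
        rw [Real.arcsin_sin (by linarith [Real.pi_pos]) (by linarith)] at harc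
        linarith

lemma K0_of_window {r_d rr th : ℝ} (hrd : 0 < r_d) (hr : r_d ≤ rr)
    (h1 : Real.arcsin (r_d/rr) < th) (h2 : th < 2*π - Real.arcsin (r_d/rr)) :
    (0 < th ∧ th < 2*π) ∧
    (rr * Real.cos th ≤ 0 ∨ r_d ≤ rr * Real.sin th ∨ rr * Real.sin th ≤ -r_d) ∧
    ¬(0 ≤ rr * Real.cos th ∧ rr * Real.sin th = -r_d) := by
  have hr0 : 0 < rr := lt_of_lt_of_le hrd hr
  have hπ := Real.pi_pos
  set s := r_d / rr with hs
  have hs0 : 0 < s := div_pos hrd hr0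
  have hs1 : s ≤ 1 := (div_le_one hr0).2 hr
  have has0 : 0 < Real.arcsin s := Real.arcsin_pos.2 hs0
  have hasp : Real.arcsin s ≤ π/2 := Real.arcsin_le_pi_div_two s
  have hsin_arcsin : Real.sin (Real.arcsin s) = s := Real.sin_arcsin (by linarith) hs1
  have hth1 : 0 < th := lt_trans has0 h1
  have hth2 : th < 2*π := by linarith
  refine ⟨⟨hth1, hth2⟩, ?_, ?_⟩
  · rcases le_or_gt (Real.cos th) 0 with hc | hc
    · exact Or.inl (mul_nonpos_of_nonneg_of_nonpos hr0.le hc)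
    · rcases cos_pos_window hth1 hth2 hc with hlt | hgt
      · right; left
        have hsth : s < Real.sin th := by
          have := Real.strictMonoOn_sin (Set.mem_Icc.2 ⟨by linarith, by linarith⟩)
            (Set.mem_Icc.2 ⟨by linarith, by linarith⟩) h1
          rwa [hsin_arcsin] at this
        have h3 : rr * s < rr * Real.sin th := mul_lt_mul_of_pos_left hsth hr0
        rw [hs, mul_div_cancel₀ _ (ne_of_gt hr0)] at h3
        linarith
      · right; right
        have hφ1 : Real.arcsin s < 2*π - th := by linarith
        have hφ2 : 2*π - th < π/2 := by linarith
        have hsφ : s < Real.sin (2*π - th) := by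
          have := Real.strictMonoOn_sin (Set.mem_Icc.2 ⟨by linarith, hasp⟩)
            (Set.mem_Icc.2 ⟨by linarith, by linarith⟩) hφ1
          rwa [hsin_arcsin] at this
        have hsinφ : Real.sin (2*π - th) = -Real.sin th := by simp [Real.sin_sub]
        have h4 : Real.sin th < -s := by rw [hsinφ] at hsφ; linarith
        have h3 : rr * Real.sin th < rr * (-s) := mul_lt_mul_of_pos_left h4 hr0
        rw [hs] at h3
        have h6 : rr * (-(r_d/rr)) = -r_d := by field_simp
        rw [h6] at h3
        linarith
  · rintro ⟨hx0, hy⟩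
    have hsneg : Real.sin th < 0 := by
      have : rr * Real.sin th < 0 := by rw [hy]; linarith
      by_contra h
      push_neg at h
      nlinarith
    have hc0 : Real.cos th = 0 := by
      rcases lt_trichotomy (Real.cos th) 0 with h | h | h
      · exfalso; nlinarith
      · exact h
      · exfalso
        rcases cos_pos_window hth1 hth2 h with hlt | hgt
        · have : 0 < Real.sin th := Real.sin_pos_of_pos_of_lt_pi hth1 (by linarith)
          linarith
        · have hφ1 : Real.arcsin s < 2*π - th := by linarith
          have hφ2 : 2*π - th < π/2 := by linarith
          have hsφ : s < Real.sin (2*π - th) := by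
            have := Real.strictMonoOn_sin (Set.mem_Icc.2 ⟨by linarith, hasp⟩)
              (Set.mem_Icc.2 ⟨by linarith, by linarith⟩) hφ1
            rwa [hsin_arcsin] at this
          have hsinφ : Real.sin (2*π - th) = -Real.sin th := by simp [Real.sin_sub]
          have h4 : Real.sin th < -s := by rw [hsinφ] at hsφ; linarith
          have h5 : rr * Real.sin th < rr * (-s) := mul_lt_mul_of_pos_left h4 hr0
          rw [hs] at h5
          have h6 : rr * (-(r_d/rr)) = -r_d := by field_simp
          rw [h6, hy] at h5
          linarith
    rcases cos_zero_window hth1 hth2 hc0 with h | h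
    · rw [h] at hsneg
      have : Real.sin (π/2) = 1 := Real.sin_pi_div_two
      linarith
    · have hsin : Real.sin th = -1 := by rw [h, Real.sin_add]; simp
      have hrr : rr = r_d := by
        rw [hsin] at hy
        linarith
      have hs1' : s = 1 := by rw [hs, hrr]; field_simp
      have harc1 : Real.arcsin s = π/2 := by rw [hs1']; exact Real.arcsin_one
      rw [harc1, h] at h2
      linarith

end UAVAux

set_option maxHeartbeats 1000000 in
theorem uav_never_enters_Cd
    (V r_d k t₀ : ℝ) (r θ : ℝ → ℝ)
    (hV : 0 < V) (hrd : 0 < r_d) (hk : 0 < k)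
    (hr' : ∀ t, t₀ ≤ t → HasDerivAt r (-V * Real.cos (θ t)) t)
    (hθ' : ∀ t, t₀ ≤ t → HasDerivAt θ
      ((if r_d ≤ r t then
          2 * k * r t * V * (Real.cos (θ t) - Real.sqrt (1 - (r_d / r t) ^ 2))
        else 0) + V * Real.sin (θ t) / r t) t)
    (h0 : r_d ≤ r t₀)
    (hθ0 : Real.arcsin (r_d / r t₀) < θ t₀ ∧ θ t₀ < 2 * π - Real.arcsin (r_d / r t₀)) :
    ∀ t, t₀ ≤ t → r_d ≤ r t ∧
      Real.arcsin (r_d / r t) ≤ θ t ∧ θ t < 2 * π - Real.arcsin (r_d / r t) := by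
  set x : ℝ → ℝ := fun t => r t * Real.cos (θ t) with hxdef
  set y : ℝ → ℝ := fun t => r t * Real.sin (θ t) with hydef
  set q : ℝ → ℝ := fun t => r t ^ 2 - r_d ^ 2 with hqdef
  set Ω : ℝ → ℝ := fun t =>
    if r_d ≤ r t then 2 * k * V * (x t - Real.sqrt (q t)) else 0 with hΩdef
  -- continuity
  have hrc : ∀ t, t₀ ≤ t → ContinuousAt r t := fun t ht => (hr' t ht).continuousAt
  have hθc : ∀ t, t₀ ≤ t → ContinuousAt θ t := fun t ht => (hθ' t ht).continuousAt
  have hxc : ∀ t, t₀ ≤ t → ContinuousAt x t := fun t ht =>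
    (hrc t ht).mul (Real.continuous_cos.continuousAt.comp (hθc t ht))
  have hyc : ∀ t, t₀ ≤ t → ContinuousAt y t := fun t ht =>
    (hrc t ht).mul (Real.continuous_sin.continuousAt.comp (hθc t ht))
  have hqc : ∀ t, t₀ ≤ t → ContinuousAt q t := fun t ht =>
    ((hrc t ht).pow 2).sub continuousAt_const
  -- pythagoras
  have hqxy : ∀ t, q t = x t ^ 2 + y t ^ 2 - r_d ^ 2 := by
    intro t
    have := Real.sin_sq_add_cos_sq (θ t)
    simp only [hxdef, hydef, hqdef]
    nlinarith [this]
  -- derivative of q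
  have hq' : ∀ t, t₀ ≤ t → HasDerivAt q (-2 * V * x t) t := by
    intro t ht
    have h1 := ((hr' t ht).pow 2).sub_const (r_d ^ 2)
    refine h1.congr_deriv (Eq.symm ?_)
    simp only [hxdef]
    ring
  -- derivatives of x and y
  have hxy' : ∀ t, t₀ ≤ t → r t ≠ 0 →
      HasDerivAt x (-V - y t * Ω t) t ∧ HasDerivAt y (x t * Ω t) t := by
    intro t ht hrt
    set ω : ℝ := (if r_d ≤ r t then
            2 * k * r t * V * (Real.cos (θ t) - Real.sqrt (1 - (r_d / r t) ^ 2))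
          else 0) with hω
    have hsin : HasDerivAt (fun s => Real.sin (θ s))
        (Real.cos (θ t) * (ω + V * Real.sin (θ t) / r t)) t :=
      (Real.hasDerivAt_sin (θ t)).comp t (hθ' t ht)
    have hcos : HasDerivAt (fun s => Real.cos (θ s))
        (-Real.sin (θ t) * (ω + V * Real.sin (θ t) / r t)) t :=
      (Real.hasDerivAt_cos (θ t)).comp t (hθ' t ht)
    have hy2 := (hr' t ht).mul hsin
    have hx2 := (hr' t ht).mul hcos
    have hpyth := Real.sin_sq_add_cos_sq (θ t)
    have hW : ω = Ω t := by
      rw [hω, hΩdef]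
      simp only [hxdef, hqdef]
      split_ifs with h
      · have hr0 : 0 < r t := lt_of_lt_of_le hrd h
        rw [← sqrt_key hrd.le hr0 h]
        ring
      · rfl
    have hdiv : r t * (V * Real.sin (θ t) / r t) = V * Real.sin (θ t) := by field_simp
    rw [hW] at hx2 hy2
    constructor
    · refine hx2.congr_deriv (Eq.symm ?_)
      simp only [hxdef, hydef]
      linear_combination Real.sin (θ t) * hdiv + V * hpyth
    · refine hy2.congr_deriv (Eq.symm ?_)
      simp only [hxdef, hydef]
      linear_combination (-Real.cos (θ t)) * hdiv
  -- Ω sign and bound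
  have hΩle : ∀ u, r_d ^ 2 ≤ y u ^ 2 → Ω u ≤ 0 := by
    intro u hu
    simp only [hΩdef]
    split_ifs with h
    · have hq_ge : x u ^ 2 ≤ q u := by rw [hqxy u]; nlinarith
      have h1 : |x u| ≤ Real.sqrt (q u) := by
        rw [← Real.sqrt_sq_eq_abs]
        exact Real.sqrt_le_sqrt hq_ge
      have h2 : x u ≤ Real.sqrt (q u) := le_trans (le_abs_self _) h1
      have h3 : (0:ℝ) < 2*k*V := by positivity
      exact mul_nonpos_of_nonneg_of_nonpos h3.le (by linarith)
    · exact le_refl 0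
  -- Ω bound
  have hΩbound : ∀ u, 0 ≤ x u → |x u * Ω u| ≤ 2*k*V*|y u^2 - r_d^2| := by
    intro u hx
    simp only [hΩdef]
    split_ifs with h
    · have hr0 : 0 < r u := lt_of_lt_of_le hrd h
      have hq0 : 0 ≤ q u := by simp only [hqdef]; nlinarith
      have hb0 : 0 ≤ Real.sqrt (q u) := Real.sqrt_nonneg _
      have hb2 : Real.sqrt (q u) ^ 2 = q u := Real.sq_sqrt hq0
      have h1 : |x u * (x u - Real.sqrt (q u))| ≤ |y u^2 - r_d^2| := by
        have e1 : |x u * (x u - Real.sqrt (q u))| = x u * |x u - Real.sqrt (q u)| := by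
          rw [abs_mul, abs_of_nonneg hx]
        have e2 : x u * |x u - Real.sqrt (q u)| ≤ (x u + Real.sqrt (q u)) * |x u - Real.sqrt (q u)| :=
          mul_le_mul_of_nonneg_right (by linarith) (abs_nonneg _)
        have e3 : (x u + Real.sqrt (q u)) * |x u - Real.sqrt (q u)|
            = |(x u + Real.sqrt (q u)) * (x u - Real.sqrt (q u))| := by
          rw [abs_mul, abs_of_nonneg (by linarith : (0:ℝ) ≤ x u + Real.sqrt (q u))]
        have e4 : (x u + Real.sqrt (q u)) * (x u - Real.sqrt (q u)) = x u^2 - q u := by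
          have : (x u + Real.sqrt (q u)) * (x u - Real.sqrt (q u))
              = x u^2 - Real.sqrt (q u)^2 := by ring
          rw [this, hb2]
        have e5 : x u^2 - q u = -(y u^2 - r_d^2) := by rw [hqxy u]; ring
        calc |x u * (x u - Real.sqrt (q u))| = x u * |x u - Real.sqrt (q u)| := e1
          _ ≤ (x u + Real.sqrt (q u)) * |x u - Real.sqrt (q u)| := e2
          _ = |(x u + Real.sqrt (q u)) * (x u - Real.sqrt (q u))| := e3
          _ = |x u^2 - q u| := by rw [e4]
          _ = |y u^2 - r_d^2| := by rw [e5, abs_neg]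
      have e6 : x u * (2*k*V*(x u - Real.sqrt (q u))) = (2*k*V) * (x u * (x u - Real.sqrt (q u))) := by
        ring
      rw [e6, abs_mul, abs_of_nonneg (by positivity : (0:ℝ) ≤ 2*k*V)]
      exact mul_le_mul_of_nonneg_left h1 (by positivity)
    · simp only [mul_zero, abs_zero]
      positivity
  -- q ≥ 0 on an interval implies r ≥ r_d there
  have hr_of_K : ∀ T, t₀ ≤ T → (∀ s, t₀ ≤ s → s ≤ T → 0 ≤ q s) →
      ∀ s, t₀ ≤ s → s ≤ T → r_d ≤ r s := by
    intro T hT hq0 s hs1 hs2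
    by_contra h
    push_neg at h
    have hqs := hq0 s hs1 hs2
    simp only [hqdef] at hqs
    have hneg : r s ≤ -r_d := by nlinarith
    have hcont : ContinuousOn r (Icc t₀ s) := fun u hu => (hrc u hu.1).continuousWithinAt
    have h0mem : (0:ℝ) ∈ Icc (r s) (r t₀) := ⟨by linarith, by linarith⟩
    obtain ⟨u, hu, hru⟩ := intermediate_value_Icc' hs1 hcont h0mem
    have hq0u := hq0 u hu.1 (le_trans hu.2 hs2)
    simp only [hqdef] at hq0u
    rw [hru] at hq0u
    nlinarith
  -- the invariant predicate
  set P : ℝ → Prop := fun t => 0 ≤ q t ∧ (x t ≤ 0 ∨ r_d ≤ y t ∨ y t ≤ -r_d) with hPdef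
  have hwin0 := K0_of_window hrd h0 hθ0.1 hθ0.2
  have hwind : x t₀ ≤ 0 ∨ r_d ≤ y t₀ ∨ y t₀ ≤ -r_d := hwin0.2.1
  have hwinS : ¬(0 ≤ x t₀ ∧ y t₀ = -r_d) := hwin0.2.2
  -- easy progress case : q > 0 and |y| > r_d
  have heasy : ∀ t1, t₀ ≤ t1 → 0 < q t1 → r_d^2 < y t1^2 →
      ∃ δ > 0, ∀ s, t1 < s → s ≤ t1 + δ → P s := by
    intro t1 ht1 hqpos hylt
    rcases lt_or_ge (y t1) 0 with hy | hy
    · have hy' : y t1 < -r_d := by nlinarith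
      have hev : ∀ᶠ u in nhds t1, q u > 0 ∧ y u < -r_d :=
        ((hqc t1 ht1).eventually (eventually_gt_nhds hqpos)).and ((hyc t1 ht1).eventually (eventually_lt_nhds hy'))
      obtain ⟨δ, hδ, hδP⟩ := near_Icc hev
      refine ⟨δ, hδ, fun s hs1 hs2 => ?_⟩
      obtain ⟨h1, h2⟩ := hδP s ⟨by linarith, by linarith⟩
      exact ⟨h1.le, Or.inr (Or.inr h2.le)⟩
    · have hy' : r_d < y t1 := by nlinarith
      have hev : ∀ᶠ u in nhds t1, q u > 0 ∧ r_d < y u :=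
        ((hqc t1 ht1).eventually (eventually_gt_nhds hqpos)).and ((hyc t1 ht1).eventually (eventually_gt_nhds hy'))
      obtain ⟨δ, hδ, hδP⟩ := near_Icc hev
      refine ⟨δ, hδ, fun s hs1 hs2 => ?_⟩
      obtain ⟨h1, h2⟩ := hδP s ⟨by linarith, by linarith⟩
      exact ⟨h1.le, Or.inr (Or.inl h2.le)⟩
  -- corner progress case : x = 0, q = 0
  have hcorner : ∀ t1, t₀ ≤ t1 → r_d ≤ r t1 → x t1 = 0 → q t1 = 0 → |y t1| = r_d →
      ∃ δ > 0, ∀ s, t1 < s → s ≤ t1 + δ → P s := by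
    intro t1 ht1 hr1 hx1 hq1 hy1
    set ε : ℝ := 1/(16*k*r_d+1) with hε
    have hεpos : 0 < ε := by positivity
    have hevx : ∀ᶠ u in nhds t1, |x u| < ε :=
      ((hxc t1 ht1).abs).eventually (eventually_lt_nhds (show |x t1| < ε by rw [hx1, abs_zero]; exact hεpos))
    have hevq : ∀ᶠ u in nhds t1, q u < ε^2 :=
      (hqc t1 ht1).eventually (eventually_lt_nhds (show q t1 < ε^2 by rw [hq1]; positivity))
    have hevy : ∀ᶠ u in nhds t1, |y u| < 2*r_d :=
      ((hyc t1 ht1).abs).eventually (eventually_lt_nhds (show |y t1| < 2*r_d by rw [hy1]; linarith))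
    have hevr : ∀ᶠ u in nhds t1, r_d/2 < r u :=
      (hrc t1 ht1).eventually (eventually_gt_nhds (show r_d/2 < r t1 by linarith))
    obtain ⟨δ, hδ, hδP⟩ := near_Icc ((hevx.and hevq).and (hevy.and hevr))
    refine ⟨δ, hδ, fun s hs1 hs2 => ?_⟩
    have hsub : ∀ u ∈ Icc t1 s, (|x u| < ε ∧ q u < ε^2) ∧ (|y u| < 2*r_d ∧ r_d/2 < r u) :=
      fun u hu => hδP u ⟨by linarith [hu.1], by linarith [hu.2]⟩
    have hxle : ∀ u ∈ Icc t1 s, x u ≤ 0 := by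
      have hder : ∀ u ∈ Icc t1 s,
          HasDerivAt (fun w => -x w - V/2*w) (V + y u * Ω u - V/2) u := by
        intro u hu
        have hrne : r u ≠ 0 := by
          have := (hsub u hu).2.2; intro hc; rw [hc] at this; linarith
        have h1 := ((hxy' u (le_trans ht1 hu.1) hrne).1.neg).sub
          ((hasDerivAt_id u).const_mul (V/2))
        refine h1.congr_deriv (Eq.symm ?_)
        ring
      have hnn : ∀ u ∈ Icc t1 s, 0 ≤ V + y u * Ω u - V/2 := by
        intro u hu
        obtain ⟨⟨hxu, hqu⟩, hyu, hru⟩ := hsub u hu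
        have hΩb : |Ω u| ≤ 2*k*V*(ε + ε) := by
          simp only [hΩdef]
          split_ifs with h
          · have hsq : Real.sqrt (q u) ≤ ε := by
              calc Real.sqrt (q u) ≤ Real.sqrt (ε^2) := Real.sqrt_le_sqrt hqu.le
                _ = ε := Real.sqrt_sq hεpos.le
            have htri : |x u - Real.sqrt (q u)| ≤ |x u| + Real.sqrt (q u) := by
              rw [sub_eq_add_neg]
              calc |x u + -Real.sqrt (q u)| ≤ |x u| + |-Real.sqrt (q u)| := abs_add_le _ _
                _ = |x u| + Real.sqrt (q u) := by rw [abs_neg, abs_of_nonneg (Real.sqrt_nonneg _)]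
            rw [abs_mul, abs_of_nonneg (by positivity : (0:ℝ) ≤ 2*k*V)]
            apply mul_le_mul_of_nonneg_left _ (by positivity : (0:ℝ) ≤ 2*k*V)
            linarith
          · rw [abs_zero]; positivity
        have hyΩ : |y u * Ω u| ≤ 2*r_d * (2*k*V*(ε+ε)) := by
          rw [abs_mul]
          exact mul_le_mul hyu.le hΩb (abs_nonneg _) (by linarith)
        have hkey : 2*r_d*(2*k*V*(ε+ε)) ≤ V/2 := by
          have h16 : (0:ℝ) < 16*k*r_d+1 := by positivity
          have he : 2*r_d*(2*k*V*(ε+ε)) = 8*k*V*r_d*(1/(16*k*r_d+1)) := by rw [hε]; ring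
          rw [he, mul_one_div, div_le_div_iff₀ h16 two_pos]
          nlinarith
        have := abs_le.1 hyΩ
        linarith
      intro u hu
      have hm : -x t1 - V/2*t1 ≤ -x u - V/2*u := mono_of_deriv hder hnn u hu
      have hu1 := hu.1
      have hprod : 0 ≤ V/2*(u - t1) := mul_nonneg (by linarith) (by linarith)
      linarith
    have hqmono := mono_of_deriv (f := q) (f' := fun u => -2*V*x u)
      (fun u hu => hq' u (le_trans ht1 hu.1))
      (fun u hu => by
        show (0:ℝ) ≤ -2*V*x u
        have h := mul_nonneg (by linarith : (0:ℝ) ≤ 2*V) (neg_nonneg.2 (hxle u hu))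
        linarith) s ⟨hs1.le, le_rfl⟩
    have hqmono' : q t1 ≤ q s := hqmono
    exact ⟨by linarith [hq1 ▸ hqmono'], Or.inl (hxle s ⟨hs1.le, le_rfl⟩)⟩
  -- Gronwall progress case : x > 0, |y| = r_d
  have hgron : ∀ t1, t₀ ≤ t1 → r_d ≤ r t1 → 0 < x t1 → 0 < q t1 → |y t1| = r_d →
      ∃ δ > 0, ∀ s, t1 < s → s ≤ t1 + δ → P s := by
    intro t1 ht1 hr1 hx1 hq1 hy1
    have hc : y t1 = r_d ∨ y t1 = -r_d := by
      rcases abs_cases (y t1) with ⟨ha, _⟩ | ⟨ha, _⟩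
      · left; linarith [hy1 ▸ ha]
      · right; linarith [hy1 ▸ ha]
    have hevx : ∀ᶠ u in nhds t1, 0 < x u := (hxc t1 ht1).eventually (eventually_gt_nhds hx1)
    have hevq : ∀ᶠ u in nhds t1, 0 < q u := (hqc t1 ht1).eventually (eventually_gt_nhds hq1)
    have hevy : ∀ᶠ u in nhds t1, |y u| < 2*r_d :=
      ((hyc t1 ht1).abs).eventually (eventually_lt_nhds (show |y t1| < 2*r_d by rw [hy1]; linarith))
    have hevr : ∀ᶠ u in nhds t1, r_d/2 < r u :=
      (hrc t1 ht1).eventually (eventually_gt_nhds (show r_d/2 < r t1 by linarith))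
    obtain ⟨δ, hδ, hδP⟩ := near_Icc ((hevx.and hevq).and (hevy.and hevr))
    refine ⟨δ, hδ, fun s hs1 hs2 => ?_⟩
    have hsub : ∀ u ∈ Icc t1 s, (0 < x u ∧ 0 < q u) ∧ |y u| < 2*r_d ∧ r_d/2 < r u :=
      fun u hu => hδP u ⟨by linarith [hu.1], by linarith [hu.2]⟩
    have hc2 : y t1 ^ 2 = r_d ^ 2 := by rcases hc with h | h <;> rw [h] <;> ring
    have hgz : ∀ u ∈ Icc t1 s, y u - y t1 = 0 := by
      apply gronwall_zero (g' := fun u => x u * Ω u) (L := 6*k*V*r_d)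
      · intro u hu
        have hrne : r u ≠ 0 := by
          have := (hsub u hu).2.2; intro hcc; rw [hcc] at this; linarith
        exact ((hxy' u (le_trans ht1 hu.1) hrne).2).sub_const (y t1)
      · intro u hu
        show |x u * Ω u| ≤ 6*k*V*r_d * |y u - y t1|
        obtain ⟨⟨hxu, hqu⟩, hyu, hru⟩ := hsub u hu
        have heq : y u ^ 2 - r_d ^ 2 = (y u - y t1) * (y u + y t1) := by
          linear_combination hc2
        have h3 : |y u + y t1| ≤ 3*r_d := by
          calc |y u + y t1| ≤ |y u| + |y t1| := abs_add_le _ _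
            _ ≤ 2*r_d + r_d := by rw [hy1]; linarith
            _ = 3*r_d := by ring
        calc |x u * Ω u| ≤ 2*k*V*|y u ^ 2 - r_d ^ 2| := hΩbound u hxu.le
          _ = 2*k*V*(|y u - y t1| * |y u + y t1|) := by rw [heq, abs_mul]
          _ ≤ 2*k*V*(|y u - y t1| * (3*r_d)) := by
              exact mul_le_mul_of_nonneg_left
                (mul_le_mul_of_nonneg_left h3 (abs_nonneg _)) (by positivity)
          _ = 6*k*V*r_d * |y u - y t1| := by ring
      · simp
    have hys : y s = y t1 := by
      have := hgz s ⟨hs1.le, le_rfl⟩; linarith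
    refine ⟨(hsub s ⟨hs1.le, le_rfl⟩).1.2.le, ?_⟩
    rcases hc with h | h
    · exact Or.inr (Or.inl (by rw [hys, h]))
    · exact Or.inr (Or.inr (by rw [hys, h]))
  -- the invariant holds for all times
  have hK : ∀ t, t₀ ≤ t → P t := by
    intro T hT
    refine contInd hT ?_ ?_ ?_ T hT le_rfl
    · exact ⟨by simp only [hqdef]; nlinarith, hwind⟩
    · intro t h1 h2 hPs
      by_contra hnot
      rcases not_and_or.1 hnot with hA | hB
      · have hq_lt : q t < 0 := not_le.1 hA
        have hev : ∀ᶠ u in nhds t, q u < 0 :=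
          (hqc t h1.le).eventually (eventually_lt_nhds hq_lt)
        obtain ⟨u, hu1, hu2, hu3⟩ := near_left h1 hev
        exact absurd (hPs u hu1 hu2).1 (not_le.2 hu3)
      · push_neg at hB
        obtain ⟨hx_, hy1, hy2⟩ := hB
        have hev : ∀ᶠ u in nhds t, 0 < x u ∧ y u < r_d ∧ -r_d < y u :=
          ((hxc t h1.le).eventually (eventually_gt_nhds hx_)).and
            (((hyc t h1.le).eventually (eventually_lt_nhds hy1)).and
             ((hyc t h1.le).eventually (eventually_gt_nhds hy2)))
        obtain ⟨u, hu1, hu2, hu3⟩ := near_left h1 hev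
        rcases (hPs u hu1 hu2).2 with h | h | h
        · linarith [hu3.1]
        · linarith [hu3.2.1]
        · linarith [hu3.2.2]
    · intro t1 ht1 hltT hPle
      obtain ⟨hq1, hd1⟩ := hPle t1 ht1 le_rfl
      have hr1 : r_d ≤ r t1 := hr_of_K t1 ht1 (fun s a b => (hPle s a b).1) t1 ht1 le_rfl
      rcases lt_trichotomy (x t1) 0 with hx1 | hx1 | hx1
      · have hev : ∀ᶠ u in nhds t1, x u < 0 :=
          (hxc t1 ht1).eventually (eventually_lt_nhds hx1)
        obtain ⟨δ, hδ, hδP⟩ := near_Icc hev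
        refine ⟨δ, hδ, fun s hs1 hs2 => ?_⟩
        have hxneg : ∀ u ∈ Icc t1 s, x u < 0 := fun u hu =>
          hδP u ⟨by linarith [hu.1], by linarith [hu.2]⟩
        have hqmono := mono_of_deriv (f := q) (f' := fun u => -2*V*x u)
          (fun u hu => hq' u (le_trans ht1 hu.1))
          (fun u hu => by
            show (0:ℝ) ≤ -2*V*x u
            have h := mul_nonneg (by linarith : (0:ℝ) ≤ 2*V) (neg_nonneg.2 (hxneg u hu).le)
            linarith) s ⟨hs1.le, le_rfl⟩
        have hqmono' : q t1 ≤ q s := hqmono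
        exact ⟨by linarith, Or.inl (hxneg s ⟨hs1.le, le_rfl⟩).le⟩
      · have hy2 : r_d^2 ≤ y t1^2 := by
          have := hqxy t1; nlinarith
        rcases eq_or_lt_of_le hy2 with hyeq | hylt
        · have hq10 : q t1 = 0 := by rw [hqxy t1]; nlinarith
          have hyabs : |y t1| = r_d := by
            rw [← Real.sqrt_sq_eq_abs, ← hyeq, Real.sqrt_sq hrd.le]
          exact hcorner t1 ht1 hr1 hx1 hq10 hyabs
        · exact heasy t1 ht1 (by rw [hqxy t1]; nlinarith) hylt
      · have hy2 : r_d^2 ≤ y t1^2 := by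
          rcases hd1 with h | h | h
          · linarith
          · nlinarith
          · nlinarith
        rcases eq_or_lt_of_le hy2 with hyeq | hylt
        · have hq1pos : 0 < q t1 := by rw [hqxy t1]; nlinarith
          have hyabs : |y t1| = r_d := by
            rw [← Real.sqrt_sq_eq_abs, ← hyeq, Real.sqrt_sq hrd.le]
          exact hgron t1 ht1 hr1 hx1 hq1pos hyabs
        · exact heasy t1 ht1 (by rw [hqxy t1]; nlinarith) hylt
  have hrge : ∀ t, t₀ ≤ t → r_d ≤ r t := fun t ht =>
    hr_of_K t ht (fun s a b => (hK s a).1) t ht le_rfl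
  -- θ stays in (0, 2π)
  have hθw : ∀ t, t₀ ≤ t → 0 < θ t ∧ θ t < 2*π := by
    intro t ht
    have hθcont : ContinuousOn θ (Icc t₀ t) := fun u hu => (hθc u hu.1).continuousWithinAt
    constructor
    · by_contra h
      push_neg at h
      obtain ⟨u, hu, hθu⟩ := intermediate_value_Icc' ht hθcont
        (⟨h, (hwin0.1.1).le⟩ : (0:ℝ) ∈ Icc (θ t) (θ t₀))
      have hP := hK u hu.1
      have hx_ : x u = r u := by simp only [hxdef]; rw [hθu, Real.cos_zero, mul_one]
      have hy_ : y u = 0 := by simp only [hydef]; rw [hθu, Real.sin_zero, mul_zero]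
      have hru : r_d ≤ r u := hrge u hu.1
      rcases hP.2 with hh | hh | hh
      · rw [hx_] at hh; linarith
      · rw [hy_] at hh; linarith
      · rw [hy_] at hh; linarith
    · by_contra h
      push_neg at h
      obtain ⟨u, hu, hθu⟩ := intermediate_value_Icc ht hθcont
        (⟨(hwin0.1.2).le, h⟩ : 2*π ∈ Icc (θ t₀) (θ t))
      have hP := hK u hu.1
      have hx_ : x u = r u := by
        simp only [hxdef]; rw [hθu, Real.cos_two_pi, mul_one]
      have hy_ : y u = 0 := by
        simp only [hydef]; rw [hθu, Real.sin_two_pi, mul_zero]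
      have hru : r_d ≤ r u := hrge u hu.1
      rcases hP.2 with hh | hh | hh
      · rw [hx_] at hh; linarith
      · rw [hy_] at hh; linarith
      · rw [hy_] at hh; linarith
  -- strictness : the trajectory never touches {x ≥ 0, y = -r_d}
  have hS : ∀ t, t₀ ≤ t → ¬(0 ≤ x t ∧ y t = -r_d) := by
    by_contra hcon
    push_neg at hcon
    obtain ⟨T, hT, hbad⟩ := hcon
    set C : Set ℝ := {u | u ∈ Icc t₀ T ∧ (x u, y u) ∈ (Ici (0:ℝ)) ×ˢ ({-r_d} : Set ℝ)} with hC
    have hCclosed : IsClosed C := by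
      have hmap : ContinuousOn (fun u => (x u, y u)) (Icc t₀ T) := fun u hu =>
        ((hxc u hu.1).prodMk (hyc u hu.1)).continuousWithinAt
      have hCeq : C = Icc t₀ T ∩ (fun u => (x u, y u)) ⁻¹' ((Ici (0:ℝ)) ×ˢ ({-r_d} : Set ℝ)) := by
        ext u; simp [hC]
      rw [hCeq]
      exact hmap.preimage_isClosed_of_isClosed isClosed_Icc
        (isClosed_Ici.prod isClosed_singleton)
    have hCne : C.Nonempty := ⟨T, ⟨hT, le_rfl⟩, by
      simp only [Set.mem_prod, Set.mem_Ici, Set.mem_singleton_iff]; exact hbad⟩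
    have hCbdd : BddBelow C := ⟨t₀, fun u hu => hu.1.1⟩
    set t1 := sInf C with ht1def
    have ht1C : t1 ∈ C := hCclosed.csInf_mem hCne hCbdd
    obtain ⟨⟨ht01, ht1T⟩, hmem⟩ := ht1C
    simp only [Set.mem_prod, Set.mem_Ici, Set.mem_singleton_iff] at hmem
    obtain ⟨hx1, hy1⟩ := hmem
    have ht0lt : t₀ < t1 := by
      rcases eq_or_lt_of_le ht01 with h | h
      · exact absurd (⟨h ▸ hx1, h ▸ hy1⟩ : 0 ≤ x t₀ ∧ y t₀ = -r_d) hwinS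
      · exact h
    have hmin : ∀ u, t₀ ≤ u → u < t1 → ¬(0 ≤ x u ∧ y u = -r_d) := by
      intro u hu1 hu2 hbadu
      have huC : u ∈ C := ⟨⟨hu1, le_trans hu2.le ht1T⟩, by
        simp only [Set.mem_prod, Set.mem_Ici, Set.mem_singleton_iff]; exact hbadu⟩
      have := csInf_le hCbdd huC
      rw [← ht1def] at this
      linarith
    have hr1 : r_d ≤ r t1 := hrge t1 ht01
    have hevy : ∀ᶠ u in nhds t1, (-(2*r_d) < y u ∧ y u < 0) :=
      ((hyc t1 ht01).eventually (eventually_gt_nhds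
        (show -(2*r_d) < y t1 by rw [hy1]; linarith))).and
      ((hyc t1 ht01).eventually (eventually_lt_nhds
        (show y t1 < 0 by rw [hy1]; linarith)))
    have hevr : ∀ᶠ u in nhds t1, r_d/2 < r u :=
      (hrc t1 ht01).eventually (eventually_gt_nhds (show r_d/2 < r t1 by linarith))
    have hxpos : ∃ δ > 0, t₀ ≤ t1 - δ ∧ (∀ u, t1 - δ ≤ u → u < t1 → 0 < x u) ∧
        (∀ u ∈ Icc (t1-δ) t1, (-(2*r_d) < y u ∧ y u < 0) ∧ r_d/2 < r u) := by
      rcases eq_or_lt_of_le hx1 with hx0 | hx0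
      · -- x t1 = 0, the corner; x must have been positive just before
        have hq10 : q t1 = 0 := by rw [hqxy t1, ← hx0, hy1]; ring
        set ε : ℝ := 1/(16*k*r_d+1) with hε
        have hεpos : 0 < ε := by positivity
        have hevx : ∀ᶠ u in nhds t1, |x u| < ε :=
          ((hxc t1 ht01).abs).eventually (eventually_lt_nhds
            (show |x t1| < ε by rw [← hx0, abs_zero]; exact hεpos))
        have hevq : ∀ᶠ u in nhds t1, q u < ε^2 :=
          (hqc t1 ht01).eventually (eventually_lt_nhds
            (show q t1 < ε^2 by rw [hq10]; positivity))
        have hevy2 : ∀ᶠ u in nhds t1, |y u| < 2*r_d :=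
          ((hyc t1 ht01).abs).eventually (eventually_lt_nhds
            (show |y t1| < 2*r_d by rw [hy1, abs_neg, abs_of_pos hrd]; linarith))
        obtain ⟨δ0, hδ0, hδP⟩ := near_Icc ((hevx.and (hevq.and hevy2)).and (hevy.and hevr))
        refine ⟨min δ0 (t1 - t₀), lt_min hδ0 (by linarith), by
          have := min_le_right δ0 (t1 - t₀); linarith, ?_, ?_⟩
        · intro u hu1 hu2
          have humem : ∀ w ∈ Icc u t1, w ∈ Icc (t1 - δ0) (t1 + δ0) := by
            intro w hw
            have h1 := min_le_left δ0 (t1 - t₀)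
            constructor
            · linarith [hw.1]
            · linarith [hw.2]
          have hder : ∀ w ∈ Icc u t1,
              HasDerivAt (fun w => -x w - V/2*w) (V + y w * Ω w - V/2) w := by
            intro w hw
            have hw0 : t₀ ≤ w := by
              have h1 := min_le_right δ0 (t1 - t₀)
              linarith [hw.1]
            have hrne : r w ≠ 0 := by
              have := (hδP w (humem w hw)).2.2
              intro hcc; rw [hcc] at this; linarith
            have h1 := ((hxy' w hw0 hrne).1.neg).sub ((hasDerivAt_id w).const_mul (V/2))
            refine h1.congr_deriv (Eq.symm ?_)
            ring
          have hnn : ∀ w ∈ Icc u t1, 0 ≤ V + y w * Ω w - V/2 := by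
            intro w hw
            obtain ⟨⟨hxw, hqw, hy2d⟩, hyy, hrw⟩ := hδP w (humem w hw)
            have hΩb : |Ω w| ≤ 2*k*V*(ε + ε) := by
              simp only [hΩdef]
              split_ifs with h
              · have hsq : Real.sqrt (q w) ≤ ε := by
                  calc Real.sqrt (q w) ≤ Real.sqrt (ε^2) := Real.sqrt_le_sqrt hqw.le
                    _ = ε := Real.sqrt_sq hεpos.le
                have htri : |x w - Real.sqrt (q w)| ≤ |x w| + Real.sqrt (q w) := by
                  rw [sub_eq_add_neg]
                  calc |x w + -Real.sqrt (q w)| ≤ |x w| + |-Real.sqrt (q w)| := abs_add_le _ _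
                    _ = |x w| + Real.sqrt (q w) := by
                        rw [abs_neg, abs_of_nonneg (Real.sqrt_nonneg _)]
                rw [abs_mul, abs_of_nonneg (by positivity : (0:ℝ) ≤ 2*k*V)]
                apply mul_le_mul_of_nonneg_left _ (by positivity : (0:ℝ) ≤ 2*k*V)
                linarith
              · rw [abs_zero]; positivity
            have hyΩ : |y w * Ω w| ≤ 2*r_d * (2*k*V*(ε+ε)) := by
              rw [abs_mul]
              exact mul_le_mul hy2d.le hΩb (abs_nonneg _) (by linarith)
            have hkey : 2*r_d*(2*k*V*(ε+ε)) ≤ V/2 := by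
              have h16 : (0:ℝ) < 16*k*r_d+1 := by positivity
              have he : 2*r_d*(2*k*V*(ε+ε)) = 8*k*V*r_d*(1/(16*k*r_d+1)) := by rw [hε]; ring
              rw [he, mul_one_div, div_le_div_iff₀ h16 two_pos]
              nlinarith
            have := abs_le.1 hyΩ
            linarith
          have hm : -x u - V/2*u ≤ -x t1 - V/2*t1 :=
            mono_of_deriv hder hnn t1 ⟨hu2.le, le_rfl⟩
          have hprod : 0 < V/2*(t1 - u) := mul_pos (by linarith) (by linarith)
          have hx0' : x t1 = 0 := hx0.symm
          linarith
        · intro u hu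
          have h1 := min_le_left δ0 (t1 - t₀)
          exact (hδP u ⟨by linarith [hu.1], by linarith [hu.2]⟩).2
      · have hevx : ∀ᶠ u in nhds t1, 0 < x u :=
          (hxc t1 ht01).eventually (eventually_gt_nhds hx0)
        obtain ⟨δ0, hδ0, hδP⟩ := near_Icc (hevx.and (hevy.and hevr))
        refine ⟨min δ0 (t1 - t₀), lt_min hδ0 (by linarith), by
          have := min_le_right δ0 (t1 - t₀); linarith, ?_, ?_⟩
        · intro u hu1 hu2
          have h1 := min_le_left δ0 (t1 - t₀)
          exact (hδP u ⟨by linarith, by linarith⟩).1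
        · intro u hu
          have h1 := min_le_left δ0 (t1 - t₀)
          exact (hδP u ⟨by linarith [hu.1], by linarith [hu.2]⟩).2
    obtain ⟨δ, hδ, hδt0, hxp, hyr⟩ := hxpos
    have hylt : ∀ u, t1 - δ ≤ u → u < t1 → y u < -r_d := by
      intro u hu1 hu2
      have hu0 : t₀ ≤ u := le_trans hδt0 hu1
      have hPu := hK u hu0
      have hxu := hxp u hu1 hu2
      have hyu := (hyr u ⟨hu1, hu2.le⟩).1
      rcases hPu.2 with h | h | h
      · linarith
      · linarith [hyu.2]
      · rcases eq_or_lt_of_le h with he | hl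
        · exact absurd ⟨hxu.le, he⟩ (hmin u hu0 hu2)
        · exact hl
    have hmono : ∀ u ∈ Icc (t1-δ) t1, -y (t1-δ) ≤ -y u := by
      apply mono_of_deriv (f := fun u => -y u) (f' := fun u => -(x u * Ω u))
      · intro u hu
        have hu0 : t₀ ≤ u := le_trans hδt0 hu.1
        have hrne : r u ≠ 0 := by
          have := (hyr u hu).2; intro hcc; rw [hcc] at this; linarith
        exact ((hxy' u hu0 hrne).2).neg
      · intro u hu
        show (0:ℝ) ≤ -(x u * Ω u)
        have hu0 : t₀ ≤ u := le_trans hδt0 hu.1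
        have hy2 : r_d^2 ≤ y u^2 := by
          rcases eq_or_lt_of_le hu.2 with he | hl
          · rw [he, hy1]; nlinarith
          · have := hylt u hu.1 hl; nlinarith
        have hΩu := hΩle u hy2
        have hxu : 0 ≤ x u := by
          rcases eq_or_lt_of_le hu.2 with he | hl
          · rw [he]; exact hx1
          · exact (hxp u hu.1 hl).le
        nlinarith [mul_nonneg hxu (neg_nonneg.2 hΩu)]
    have hfinal := hmono t1 ⟨by linarith, le_rfl⟩
    have hy0 := hylt (t1-δ) le_rfl (by linarith)
    rw [hy1] at hfinal
    linarith
  -- conclusion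
  intro t ht
  have hKt := hK t ht
  have hrt := hrge t ht
  have hθwt := hθw t ht
  have hSt := hS t ht
  exact ⟨hrt, window_of_K hrd hrt hθwt.1 hθwt.2 hKt.2 hSt⟩
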